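/- Let χ be a primitive Dirichlet character of conductor q and b an integer. Then ∑_{a mod q} χ(a) conj(χ(a+b)) = ∏_{p^k || q, p^i || b, i ≤ k−1} μ(p^{k−i}) p^i · ∏_{p^k || q, p^k | b} φ(p^k). In particular, the sum vanishes unless q divides b·∏_{p | q} p. -/

import Mathlib

open Finset

-- L1: sum over range q = sum over ZMod q
lemma aux_sum_range_eq {q : ℕ} [NeZero q] (F : ZMod q → ℂ) :
    ∑ a ∈ Finset.range q, F (a : ZMod q) = ∑ x : ZMod q, F x := by
  refine Finset.sum_nbij' (fun a => (a : ZMod q)) (fun x => x.val) ?_ ?_ ?_ ?_ ?_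
  · intro a _; exact Finset.mem_univ _
  · intro x _; exact Finset.mem_range.mpr (ZMod.val_lt x)
  · intro a ha; exact ZMod.val_cast_of_lt (Finset.mem_range.mp ha)
  · intro x _; exact ZMod.natCast_zmod_val x
  · intro a _; rfl

-- L2: orthogonality
lemma aux_orth {q : ℕ} [NeZero q] (c : ZMod q) :
    ∑ y : ZMod q, ZMod.stdAddChar (c * y) = if c = 0 then (q : ℂ) else 0 := by
  have : ∀ y : ZMod q, ZMod.stdAddChar (c * y) = (ZMod.stdAddChar.mulShift c) y := by
    intro y; rfl
  simp_rw [this]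
  split_ifs with hc
  · subst hc
    simp [AddChar.mulShift_apply, ZMod.card]
  · exact AddChar.sum_eq_zero_of_ne_one (ZMod.isPrimitive_stdAddChar q hc)

-- L3: Gauss sum of primitive character is nonzero
lemma aux_gaussSum_ne_zero {q : ℕ} [NeZero q] (χ : DirichletCharacter ℂ q)
    (hχ : χ.IsPrimitive) : gaussSum χ ZMod.stdAddChar ≠ 0 := by
  set ψ : AddChar (ZMod q) ℂ := ZMod.stdAddChar with hψ
  have key : ∑ y : ZMod q, gaussSum χ (ψ.mulShift y) * ψ (-y) = (q : ℂ) := by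
    have : ∀ y : ZMod q, gaussSum χ (ψ.mulShift y) * ψ (-y)
        = ∑ x : ZMod q, χ x * ψ ((x - 1) * y) := by
      intro y
      rw [gaussSum, Finset.sum_mul]
      refine Finset.sum_congr rfl fun x _ => ?_
      rw [AddChar.mulShift_apply, mul_assoc, ← AddChar.map_add_eq_mul]
      ring_nf
    simp_rw [this]
    rw [Finset.sum_comm]
    have : ∀ x : ZMod q, ∑ y : ZMod q, χ x * ψ ((x - 1) * y)
        = χ x * (if x - 1 = 0 then (q : ℂ) else 0) := by
      intro x
      rw [← Finset.mul_sum, aux_orth]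
    simp_rw [this]
    rw [Finset.sum_eq_single 1]
    · simp
    · intro x _ hx
      rw [if_neg (by simpa [sub_eq_zero] using hx), mul_zero]
    · intro h; exact absurd (Finset.mem_univ _) h
  intro h0
  have : ∑ y : ZMod q, gaussSum χ (ψ.mulShift y) * ψ (-y) = 0 := by
    refine Finset.sum_eq_zero fun y _ => ?_
    rw [gaussSum_mulShift_of_isPrimitive _ hχ, h0, mul_zero, zero_mul]
  rw [this] at key
  exact NeZero.ne' (q : ℂ) (by exact_mod_cast key) |>.elim

-- L4: conjugate of χ equals χ⁻¹ pointwise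
lemma aux_conj_eq_inv {q : ℕ} [NeZero q] (χ : DirichletCharacter ℂ q) (y : ZMod q) :
    (starRingEnd ℂ) (χ y) = χ⁻¹ y := by
  by_cases hy : IsUnit y
  · have hk : (χ y) ^ (Fintype.card (ZMod q)ˣ) = 1 := by
      rw [← map_pow]
      have : y ^ (Fintype.card (ZMod q)ˣ) = ((hy.unit ^ (Fintype.card (ZMod q)ˣ) : (ZMod q)ˣ) : ZMod q) := by
        rw [Units.val_pow_eq_pow_val, IsUnit.unit_spec]
      rw [this, pow_card_eq_one, Units.val_one, map_one]
    have hnorm : ‖χ y‖ = 1 :=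
      Complex.norm_eq_one_of_pow_eq_one hk Fintype.card_ne_zero
    have h2 : χ y * (starRingEnd ℂ) (χ y) = 1 := by
      rw [Complex.mul_conj, Complex.normSq_eq_norm_sq, hnorm]
      norm_num
    rw [MulChar.inv_apply_eq_inv' χ y]
    exact eq_inv_of_mul_eq_one_left (by rw [mul_comm] at h2; exact h2)
  · rw [MulChar.map_nonunit χ hy, MulChar.map_nonunit χ⁻¹ hy, map_zero]

-- L5: main Gauss-sum manipulation
lemma aux_shifted_sum_eq_ramanujan {q : ℕ} [NeZero q] (χ : DirichletCharacter ℂ q)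
    (hχ : χ.IsPrimitive) (c : ZMod q) :
    ∑ x : ZMod q, χ x * (starRingEnd ℂ) (χ (x + c)) =
      ∑ t : ZMod q, (if IsUnit t then (1:ℂ) else 0) * ZMod.stdAddChar (c * t) := by
  set ψ : AddChar (ZMod q) ℂ := ZMod.stdAddChar with hψ
  set τ : ℂ := gaussSum χ ψ with hτdef
  have hτ : τ ≠ 0 := aux_gaussSum_ne_zero χ hχ
  apply mul_right_cancel₀ hτ
  calc (∑ x : ZMod q, χ x * (starRingEnd ℂ) (χ (x + c))) * τ
      = ∑ x : ZMod q, χ x * (χ⁻¹ (x + c) * τ) := by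
        rw [Finset.sum_mul]
        refine Finset.sum_congr rfl fun x _ => ?_
        rw [aux_conj_eq_inv, mul_assoc]
    _ = ∑ x : ZMod q, ∑ t : ZMod q, χ x * (χ t * ψ ((x + c) * t)) := by
        refine Finset.sum_congr rfl fun x _ => ?_
        rw [← gaussSum_mulShift_of_isPrimitive _ hχ, gaussSum, Finset.mul_sum]
        rfl
    _ = ∑ t : ZMod q, (χ t * ψ (c * t)) * ∑ x : ZMod q, χ x * ψ (t * x) := by
        rw [Finset.sum_comm]
        refine Finset.sum_congr rfl fun t _ => ?_
        rw [Finset.mul_sum]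
        refine Finset.sum_congr rfl fun x _ => ?_
        have : ψ ((x + c) * t) = ψ (c * t) * ψ (t * x) := by
          rw [← AddChar.map_add_eq_mul]; ring_nf
        rw [this]; ring
    _ = ∑ t : ZMod q, (χ t * ψ (c * t)) * (χ⁻¹ t * τ) := by
        refine Finset.sum_congr rfl fun t _ => ?_
        rw [← gaussSum_mulShift_of_isPrimitive _ hχ, gaussSum]
        rfl
    _ = (∑ t : ZMod q, (if IsUnit t then (1:ℂ) else 0) * ψ (c * t)) * τ := by
        rw [Finset.sum_mul]
        refine Finset.sum_congr rfl fun t _ => ?_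
        have : χ t * χ⁻¹ t = if IsUnit t then (1:ℂ) else 0 := by
          by_cases ht : IsUnit t
          · rw [← MulChar.mul_apply, mul_inv_cancel, MulChar.one_apply ht, if_pos ht]
          · rw [MulChar.map_nonunit χ ht, zero_mul, if_neg ht]
        calc χ t * ψ (c * t) * (χ⁻¹ t * τ) = (χ t * χ⁻¹ t) * ψ (c * t) * τ := by ring
          _ = _ := by rw [this]

-- L6c: inner sum over multiples of d
lemma aux_inner_sum {q : ℕ} [NeZero q] (b : ℤ) {d : ℕ} (hd : d ∣ q) (hd0 : d ≠ 0) :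
    ∑ x ∈ Finset.univ.filter (fun x : ZMod q => d ∣ x.val),
        ZMod.stdAddChar (((b : ZMod q)) * x) =
      if ((q / d : ℕ) : ℤ) ∣ b then ((q / d : ℕ) : ℂ) else 0 := by
  have hq0 : q ≠ 0 := NeZero.ne q
  set m := q / d with hm
  have hdm : d * m = q := Nat.mul_div_cancel' hd
  have hm0 : m ≠ 0 := fun h => hq0 (by rw [← hdm, h, mul_zero])
  haveI : NeZero m := ⟨hm0⟩
  have step1 : ∑ x ∈ Finset.univ.filter (fun x : ZMod q => d ∣ x.val),
      ZMod.stdAddChar (((b : ZMod q)) * x) =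
      ∑ j ∈ Finset.range m, ZMod.stdAddChar (((b : ZMod q)) * ((d * j : ℕ) : ZMod q)) := by
    refine Finset.sum_nbij' (i := fun x : ZMod q => x.val / d)
      (j := fun j : ℕ => ((d * j : ℕ) : ZMod q)) ?_ ?_ ?_ ?_ ?_
    · intro x hx
      have hdx : d ∣ x.val := by simpa using (Finset.mem_filter.mp hx).2
      simp only [Finset.mem_range]
      rw [hm]
      exact Nat.div_lt_div_of_lt_of_dvd hd (ZMod.val_lt x)
    · intro j hj
      refine Finset.mem_filter.mpr ⟨Finset.mem_univ _, ?_⟩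
      simp only [ZMod.val_natCast]
      exact (Nat.dvd_mod_iff hd).mpr ⟨j, rfl⟩
    · intro x hx
      have hdx : d ∣ x.val := by simpa using (Finset.mem_filter.mp hx).2
      rw [Nat.mul_div_cancel' hdx, ZMod.natCast_zmod_val]
    · intro j hj
      have hlt : d * j < q := by
        have h1 : j < m := Finset.mem_range.mp hj
        calc d * j < d * m :=
              Nat.mul_lt_mul_of_le_of_lt (le_refl d) h1 (Nat.pos_of_ne_zero hd0)
          _ = q := hdm
      simp only [ZMod.val_natCast]
      rw [Nat.mod_eq_of_lt hlt, Nat.mul_div_cancel_left _ (Nat.pos_of_ne_zero hd0)]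
    · intro x hx
      have hdx : d ∣ x.val := by simpa using (Finset.mem_filter.mp hx).2
      rw [Nat.mul_div_cancel' hdx, ZMod.natCast_zmod_val]
  have step2 : ∀ j : ℕ, ZMod.stdAddChar (((b : ZMod q)) * ((d * j : ℕ) : ZMod q)) =
      ZMod.stdAddChar (((b * j : ℤ) : ZMod m)) := by
    intro j
    have h1 : ((b : ZMod q)) * ((d * j : ℕ) : ZMod q) = (((b * (d * j) : ℤ)) : ZMod q) := by
      push_cast; ring
    rw [h1, ZMod.stdAddChar_coe, ZMod.stdAddChar_coe]
    congr 1
    have hqc : (q : ℂ) = (d : ℂ) * m := by exact_mod_cast congrArg (Nat.cast : ℕ → ℂ) hdm.symm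
    have hd0' : (d : ℂ) ≠ 0 := Nat.cast_ne_zero.mpr hd0
    have hm0' : (m : ℂ) ≠ 0 := Nat.cast_ne_zero.mpr hm0
    rw [hqc]
    push_cast
    field_simp
  simp_rw [step1, step2]
  have step3 : ∑ j ∈ Finset.range m, ZMod.stdAddChar (((b * j : ℤ) : ZMod m)) =
      ∑ y : ZMod m, ZMod.stdAddChar ((b : ZMod m) * y) := by
    rw [← aux_sum_range_eq (fun y : ZMod m => ZMod.stdAddChar ((b : ZMod m) * y))]
    refine Finset.sum_congr rfl fun j _ => ?_
    congr 1
    push_cast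
    ring
  rw [step3, aux_orth]
  congr 1
  simp [ZMod.intCast_zmod_eq_zero_iff_dvd]

-- L6: Ramanujan sum as a divisor sum
lemma aux_ramanujan_eq_divisor_sum {q : ℕ} [NeZero q] (b : ℤ) :
    ∑ t : ZMod q, (if IsUnit t then (1:ℂ) else 0) * ZMod.stdAddChar ((b : ZMod q) * t) =
      ∑ d ∈ q.divisors, (ArithmeticFunction.moebius d : ℂ) *
        (if ((q / d : ℕ) : ℤ) ∣ b then ((q / d : ℕ) : ℂ) else 0) := by
  have hq0 : q ≠ 0 := NeZero.ne q
  have hind : ∀ t : ZMod q, (if IsUnit t then (1:ℂ) else 0) =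
      ∑ d ∈ q.divisors.filter (· ∣ t.val), (ArithmeticFunction.moebius d : ℂ) := by
    intro t
    have hfe : q.divisors.filter (· ∣ t.val) = (Nat.gcd t.val q).divisors := by
      ext e
      simp only [Finset.mem_filter, Nat.mem_divisors, Nat.dvd_gcd_iff]
      constructor
      · rintro ⟨⟨h1, _⟩, h2⟩
        exact ⟨⟨h2, h1⟩, fun h => hq0 (Nat.eq_zero_of_gcd_eq_zero_right h)⟩
      · rintro ⟨⟨h1, h2⟩, _⟩
        exact ⟨⟨h2, hq0⟩, h1⟩
    have hsum : ∀ n : ℕ, (∑ d ∈ n.divisors, ArithmeticFunction.moebius d) =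
        if n = 1 then 1 else 0 := by
      intro n
      rw [← ArithmeticFunction.coe_mul_zeta_apply, ArithmeticFunction.moebius_mul_coe_zeta,
        ArithmeticFunction.one_apply]
    have h0 := ZMod.isUnit_iff_coprime t.val q
    rw [ZMod.natCast_zmod_val] at h0
    have hcast : ∑ d ∈ (Nat.gcd t.val q).divisors, (ArithmeticFunction.moebius d : ℂ) =
        ((∑ d ∈ (Nat.gcd t.val q).divisors, ArithmeticFunction.moebius d : ℤ) : ℂ) := by
      push_cast; rfl
    rw [hfe, hcast, hsum]
    by_cases hu : IsUnit t
    · rw [if_pos hu, if_pos (h0.mp hu), Int.cast_one]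
    · rw [if_neg hu, if_neg (fun h => hu (h0.mpr h)), Int.cast_zero]
  calc ∑ t : ZMod q, (if IsUnit t then (1:ℂ) else 0) * ZMod.stdAddChar ((b : ZMod q) * t)
      = ∑ t : ZMod q, ∑ d ∈ q.divisors,
          (if d ∣ t.val then (ArithmeticFunction.moebius d : ℂ) *
            ZMod.stdAddChar ((b : ZMod q) * t) else 0) := by
        refine Finset.sum_congr rfl fun t _ => ?_
        rw [hind t, Finset.sum_mul, Finset.sum_filter]
    _ = ∑ d ∈ q.divisors, ∑ t : ZMod q,
          (if d ∣ t.val then (ArithmeticFunction.moebius d : ℂ) *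
            ZMod.stdAddChar ((b : ZMod q) * t) else 0) := Finset.sum_comm
    _ = ∑ d ∈ q.divisors, (ArithmeticFunction.moebius d : ℂ) *
          ∑ t ∈ Finset.univ.filter (fun t : ZMod q => d ∣ t.val),
            ZMod.stdAddChar ((b : ZMod q) * t) := by
        refine Finset.sum_congr rfl fun d _ => ?_
        rw [Finset.mul_sum, ← Finset.sum_filter]
    _ = ∑ d ∈ q.divisors, (ArithmeticFunction.moebius d : ℂ) *
          (if ((q / d : ℕ) : ℤ) ∣ b then ((q / d : ℕ) : ℂ) else 0) := by
        refine Finset.sum_congr rfl fun d hd => ?_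
        rw [aux_inner_sum b (Nat.mem_divisors.mp hd).1
          (Nat.pos_of_mem_divisors hd).ne']

noncomputable def Gfun (b : ℤ) : ArithmeticFunction ℂ :=
  ⟨fun n => if (n : ℤ) ∣ b then (n : ℂ) else 0, by simp⟩

lemma Gfun_apply (b : ℤ) (n : ℕ) : Gfun b n = if (n : ℤ) ∣ b then (n : ℂ) else 0 := rfl

lemma Gfun_isMultiplicative (b : ℤ) : (Gfun b).IsMultiplicative := by
  constructor
  · simp [Gfun_apply]
  · intro m n hmn
    simp only [Gfun_apply]
    have key : ((m * n : ℕ) : ℤ) ∣ b ↔ ((m : ℕ) : ℤ) ∣ b ∧ ((n : ℕ) : ℤ) ∣ b := by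
      constructor
      · intro h
        constructor
        · exact (dvd_trans (by exact_mod_cast dvd_mul_right m n) h)
        · exact (dvd_trans (by exact_mod_cast dvd_mul_left n m) h)
      · rintro ⟨h1, h2⟩
        have hcop : IsCoprime (m : ℤ) (n : ℤ) := Nat.isCoprime_iff_coprime.mpr hmn
        have := hcop.mul_dvd h1 h2
        exact_mod_cast this
    by_cases h : ((m * n : ℕ) : ℤ) ∣ b
    · rw [if_pos h, if_pos (key.mp h).1, if_pos (key.mp h).2]
      push_cast; ring
    · rw [if_neg h]
      rcases not_and_or.mp (fun hc => h (key.mpr hc)) with h1 | h1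
      · rw [if_neg h1, zero_mul]
      · rw [if_neg h1, mul_zero]

noncomputable def Ffun (b : ℤ) : ArithmeticFunction ℂ :=
  ((ArithmeticFunction.moebius : ArithmeticFunction ℤ) : ArithmeticFunction ℂ) * Gfun b

lemma Ffun_isMultiplicative (b : ℤ) : (Ffun b).IsMultiplicative :=
  (ArithmeticFunction.isMultiplicative_moebius.intCast).mul (Gfun_isMultiplicative b)

lemma Ffun_apply (b : ℤ) (n : ℕ) :
    Ffun b n = ∑ d ∈ n.divisors, (ArithmeticFunction.moebius d : ℂ) *
      (if ((n / d : ℕ) : ℤ) ∣ b then ((n / d : ℕ) : ℂ) else 0) := by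
  rw [Ffun, ArithmeticFunction.mul_apply,
    Nat.sum_divisorsAntidiagonal (fun i j => (((ArithmeticFunction.moebius : ArithmeticFunction ℤ) : ArithmeticFunction ℂ)) i * Gfun b j)]
  refine Finset.sum_congr rfl fun d _ => ?_
  rw [ArithmeticFunction.intCoe_apply, Gfun_apply]

-- local evaluation at prime powers
lemma Ffun_prime_pow (b : ℤ) {p k : ℕ} (hp : p.Prime) (hk : k ≠ 0) :
    Ffun b (p ^ k) = Gfun b (p ^ k) - Gfun b (p ^ (k - 1)) := by
  obtain ⟨k', rfl⟩ : ∃ k', k = k' + 1 := ⟨k - 1, (Nat.succ_pred_eq_of_pos (Nat.pos_of_ne_zero hk)).symm⟩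
  rw [Ffun_apply, Nat.sum_divisors_prime_pow hp]
  have hterm : ∀ i ∈ Finset.range (k' + 2), (ArithmeticFunction.moebius (p ^ i) : ℂ) *
      (if ((p ^ (k' + 1) / p ^ i : ℕ) : ℤ) ∣ b then ((p ^ (k' + 1) / p ^ i : ℕ) : ℂ) else 0) =
      (ArithmeticFunction.moebius (p ^ i) : ℂ) * Gfun b (p ^ (k' + 1 - i)) := by
    intro i hi
    have hle : i ≤ k' + 1 := Nat.lt_succ_iff.mp (Finset.mem_range.mp hi)
    rw [Nat.pow_div hle hp.pos, Gfun_apply]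
  rw [Finset.sum_congr rfl hterm, Finset.sum_range_succ', Finset.sum_range_succ']
  have hzero : ∀ i ∈ Finset.range k',
      (ArithmeticFunction.moebius (p ^ (i + 1 + 1)) : ℂ) * Gfun b (p ^ (k' + 1 - (i + 1 + 1))) = 0 := by
    intro i _
    rw [ArithmeticFunction.moebius_apply_prime_pow hp (by omega), if_neg (by omega)]
    simp
  rw [Finset.sum_eq_zero hzero, pow_zero, ArithmeticFunction.moebius_apply_one,
    pow_one, ArithmeticFunction.moebius_apply_prime hp]
  push_cast
  ring_nf

lemma Ffun_prime_pow_eval (b : ℤ) {p k : ℕ} (hp : p.Prime) (hk : k ≠ 0) :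
    Ffun b (p ^ k) =
      if (p : ℤ) ^ k ∣ b then (Nat.totient (p ^ k) : ℂ)
      else ((ArithmeticFunction.moebius (p ^ (k - b.natAbs.factorization p)) : ℤ) : ℂ) *
        (p : ℂ) ^ (b.natAbs.factorization p) := by
  rw [Ffun_prime_pow b hp hk, Gfun_apply, Gfun_apply]
  have hcast : ∀ j : ℕ, ((p ^ j : ℕ) : ℤ) = (p : ℤ) ^ j := by intro j; push_cast; ring
  by_cases hb : (p : ℤ) ^ k ∣ b
  · have hb' : (p : ℤ) ^ (k - 1) ∣ b := dvd_trans (pow_dvd_pow _ (Nat.sub_le k 1)) hb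
    rw [if_pos (by rw [hcast]; exact hb), if_pos (by rw [hcast]; exact hb'), if_pos hb]
    rw [Nat.totient_prime_pow hp (Nat.pos_of_ne_zero hk)]
    have hk1 : k - 1 + 1 = k := Nat.succ_pred_eq_of_pos (Nat.pos_of_ne_zero hk)
    push_cast [Nat.cast_sub hp.one_le]
    rw [mul_sub, mul_one, ← pow_succ, hk1]
  · have hbne : b ≠ 0 := by rintro rfl; exact hb (dvd_zero _)
    have hnb : b.natAbs ≠ 0 := Int.natAbs_ne_zero.mpr hbne
    set v := b.natAbs.factorization p with hv
    have hdvd_iff : ∀ j : ℕ, (p : ℤ) ^ j ∣ b ↔ j ≤ v := by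
      intro j
      rw [← hcast, Int.natCast_dvd, Nat.Prime.pow_dvd_iff_le_factorization hp hnb]
    have hvk : v < k := by
      by_contra h
      exact hb ((hdvd_iff k).mpr (le_of_not_gt h))
    rw [if_neg hb, if_neg (by rw [hcast]; exact hb)]
    by_cases hveq : v = k - 1
    · have : (p : ℤ) ^ (k - 1) ∣ b := (hdvd_iff _).mpr (le_of_eq hveq.symm)
      rw [if_pos (by rw [hcast]; exact this)]
      have hkv : k - v = 1 := by omega
      rw [hkv, pow_one, ArithmeticFunction.moebius_apply_prime hp]
      push_cast
      rw [hveq]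
      ring
    · have hlt : ¬ ((k : ℕ) - 1 ≤ v) := by omega
      rw [if_neg (by rw [hcast, hdvd_iff]; exact hlt)]
      rw [ArithmeticFunction.moebius_apply_prime_pow hp (by omega), if_neg (by omega)]
      simp

lemma Ffun_eq_prod (b : ℤ) {q : ℕ} (hq0 : q ≠ 0) :
    Ffun b q = ∏ p ∈ q.primeFactors, Ffun b (p ^ q.factorization p) := by
  rw [(Ffun_isMultiplicative b).multiplicative_factorization _ hq0]
  rfl

/- Evaluation of `∑_{a mod q} χ(a) conj(χ(a+b))` for a primitive character `χ` mod `q`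
as a product over the exact prime powers `p^k ∥ q`; in particular the sum vanishes
unless `q ∣ b ∏_{p ∣ q} p`. -/
theorem primitive_character_shifted_sum_formula
    (q : ℕ) (hq : 1 ≤ q)
    (χ : DirichletCharacter ℂ q) (hχ : χ.IsPrimitive) (b : ℤ) :
    (∑ a ∈ Finset.range q,
        χ (a : ZMod q) * (starRingEnd ℂ) (χ ((a : ZMod q) + (b : ZMod q))) =
      ∏ p ∈ q.primeFactors,
        (if (p : ℤ) ^ (q.factorization p) ∣ b then
            (Nat.totient (p ^ (q.factorization p)) : ℂ)
          else
            ((ArithmeticFunction.moebius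
                (p ^ (q.factorization p - b.natAbs.factorization p)) : ℤ) : ℂ) *
              (p : ℂ) ^ (b.natAbs.factorization p))) ∧
    ((∑ a ∈ Finset.range q,
        χ (a : ZMod q) * (starRingEnd ℂ) (χ ((a : ZMod q) + (b : ZMod q))) ≠ 0) →
      (q : ℤ) ∣ b * ∏ p ∈ q.primeFactors, (p : ℤ)) := by
  have hq0 : q ≠ 0 := by omega
  haveI : NeZero q := ⟨hq0⟩
  have h1 : ∑ a ∈ Finset.range q,
      χ (a : ZMod q) * (starRingEnd ℂ) (χ ((a : ZMod q) + (b : ZMod q))) =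
      ∏ p ∈ q.primeFactors,
        (if (p : ℤ) ^ (q.factorization p) ∣ b then
            (Nat.totient (p ^ (q.factorization p)) : ℂ)
          else
            ((ArithmeticFunction.moebius
                (p ^ (q.factorization p - b.natAbs.factorization p)) : ℤ) : ℂ) *
              (p : ℂ) ^ (b.natAbs.factorization p)) := by
    calc ∑ a ∈ Finset.range q,
        χ (a : ZMod q) * (starRingEnd ℂ) (χ ((a : ZMod q) + (b : ZMod q)))
        = ∑ x : ZMod q, χ x * (starRingEnd ℂ) (χ (x + (b : ZMod q))) :=
          aux_sum_range_eq (fun x => χ x * (starRingEnd ℂ) (χ (x + (b : ZMod q))))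
      _ = ∑ t : ZMod q, (if IsUnit t then (1:ℂ) else 0) *
            ZMod.stdAddChar ((b : ZMod q) * t) :=
          aux_shifted_sum_eq_ramanujan χ hχ (b : ZMod q)
      _ = ∑ d ∈ q.divisors, (ArithmeticFunction.moebius d : ℂ) *
            (if ((q / d : ℕ) : ℤ) ∣ b then ((q / d : ℕ) : ℂ) else 0) :=
          aux_ramanujan_eq_divisor_sum b
      _ = Ffun b q := (Ffun_apply b q).symm
      _ = ∏ p ∈ q.primeFactors, Ffun b (p ^ q.factorization p) := Ffun_eq_prod b hq0
      _ = _ := by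
          refine Finset.prod_congr rfl fun p hp => ?_
          have hpp := Nat.prime_of_mem_primeFactors hp
          have hk : q.factorization p ≠ 0 :=
            (Nat.Prime.factorization_pos_of_dvd hpp hq0 (Nat.dvd_of_mem_primeFactors hp)).ne'
          exact Ffun_prime_pow_eval b hpp hk
  refine ⟨h1, fun hne => ?_⟩
  rcases eq_or_ne b 0 with rfl | hbne
  · simp
  rw [h1] at hne
  have hfac := Finset.prod_ne_zero_iff.mp hne
  have hnb : b.natAbs ≠ 0 := Int.natAbs_ne_zero.mpr hbne
  set P : ℕ := ∏ p ∈ q.primeFactors, p with hP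
  have hP0 : P ≠ 0 := Finset.prod_ne_zero_iff.mpr fun p hp =>
    (Nat.prime_of_mem_primeFactors hp).ne_zero
  have hdvd : q ∣ b.natAbs * P := by
    rw [← Nat.factorization_le_iff_dvd hq0 (Nat.mul_ne_zero hnb hP0)]
    rw [Finsupp.le_def]
    intro p
    by_cases hp : p ∈ q.primeFactors
    · have hpp := Nat.prime_of_mem_primeFactors hp
      have hPp : 1 ≤ P.factorization p :=
        Nat.Prime.factorization_pos_of_dvd hpp hP0 (Finset.dvd_prod_of_mem _ hp)
      have hmul : (b.natAbs * P).factorization p =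
          b.natAbs.factorization p + P.factorization p := by
        rw [Nat.factorization_mul hnb hP0]; rfl
      set k := q.factorization p with hk
      set v := b.natAbs.factorization p with hv
      have hkv : k ≤ v + 1 := by
        have := hfac p hp
        by_cases hb : (p : ℤ) ^ k ∣ b
        · have : p ^ k ∣ b.natAbs := by
            rw [← Int.natCast_dvd]; exact_mod_cast hb
          have := (Nat.Prime.pow_dvd_iff_le_factorization hpp hnb).mp this
          omega
        · rw [if_neg hb] at this
          have hmu : (ArithmeticFunction.moebius (p ^ (k - v)) : ℤ) ≠ 0 := by
            intro h0
            apply this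
            rw [h0]
            simp
          by_contra hcon
          have h2 : k - v ≠ 0 ∧ k - v ≠ 1 := by omega
          rw [ArithmeticFunction.moebius_apply_prime_pow hpp h2.1, if_neg h2.2] at hmu
          exact hmu rfl
      rw [hmul]
      omega
    · have : q.factorization p = 0 := by
        rw [← Finsupp.notMem_support_iff, Nat.support_factorization]
        exact hp
      rw [this]
      exact Nat.zero_le _
  have hdvdZ : (q : ℤ) ∣ (b.natAbs : ℤ) * (P : ℤ) := by exact_mod_cast Int.natCast_dvd_natCast.mpr hdvd
  have hprod : ∏ p ∈ q.primeFactors, (p : ℤ) = (P : ℤ) := by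
    rw [hP]; push_cast; rfl
  rw [hprod]
  rcases Int.natAbs_eq b with h | h
  · rw [h]; exact hdvdZ
  · rw [h, neg_mul]
    exact dvd_neg.mpr hdvdZ
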